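/- Let H and M be real Hilbert spaces, 𝔞 : H × H → R and 𝔟 : H × M → R bounded bilinear forms, and let H_h ⊆ H, M_h ⊆ M be finite-dimensional subspaces. Suppose (i) there is α > 0 with sup_{y ∈ N_h, y ≠ 0} 𝔞(x, y)/‖y‖ ≥ α‖x‖ for all x in the discrete kernel N_h = {x ∈ H_h : 𝔟(x, l) = 0 for all l ∈ M_h}, and (ii) there is β > 0 with sup_{x ∈ H_h, x ≠ 0} 𝔟(x, l)/‖x‖ ≥ β‖l‖ for all l ∈ M_h. Then for any bounded linear functionals F on H and G on M, the discrete saddle-point problem: find (x_h, m_h) ∈ H_h × M_h with 𝔞(x_h, y) + 𝔟(y, m_h) = F(y) for all y ∈ H_h and 𝔟(x_h, l) = G(l) for all l ∈ M_h, has a unique solution. -/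

import Mathlib

theorem stmt_4
    {H M : Type*} [NormedAddCommGroup H] [InnerProductSpace ℝ H] [CompleteSpace H]
    [NormedAddCommGroup M] [InnerProductSpace ℝ M] [CompleteSpace M]
    (a : H → H → ℝ) (b : H → M → ℝ)
    (ha1 : ∀ (c : ℝ) (x x' y), a (c • x + x') y = c * a x y + a x' y)
    (ha2 : ∀ (c : ℝ) (x y y'), a x (c • y + y') = c * a x y + a x y')
    (hb1 : ∀ (c : ℝ) (x x' l), b (c • x + x') l = c * b x l + b x' l)
    (hb2 : ∀ (c : ℝ) (x l l'), b x (c • l + l') = c * b x l + b x l')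
    (Ca Cb : ℝ)
    (haC : ∀ x y, |a x y| ≤ Ca * ‖x‖ * ‖y‖)
    (hbC : ∀ x l, |b x l| ≤ Cb * ‖x‖ * ‖l‖)
    (Hh : Submodule ℝ H) (Mh : Submodule ℝ M)
    [FiniteDimensional ℝ Hh] [FiniteDimensional ℝ Mh]
    (N : Set H) (hN : N = {x | x ∈ Hh ∧ ∀ l ∈ Mh, b x l = 0})
    (α : ℝ) (hα : 0 < α)
    (hcoer : ∀ x ∈ N, α * ‖x‖ ≤ sSup {t : ℝ | ∃ y ∈ N, y ≠ 0 ∧ t = a x y / ‖y‖})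
    (β : ℝ) (hβ : 0 < β)
    (hinfsup : ∀ l ∈ Mh, β * ‖l‖ ≤ sSup {t : ℝ | ∃ x ∈ Hh, x ≠ 0 ∧ t = b x l / ‖x‖})
    (F : H →L[ℝ] ℝ) (G : M →L[ℝ] ℝ) :
    ∃! p : H × M, p.1 ∈ Hh ∧ p.2 ∈ Mh ∧
      (∀ y ∈ Hh, a p.1 y + b y p.2 = F y) ∧
      (∀ l ∈ Mh, b p.1 l = G l) := by
  -- basic linearity consequences
  have ha01 : ∀ y, a 0 y = 0 := by
    intro y; have := ha1 1 0 0 y; simp at this; linarith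
  have ha02 : ∀ x, a x 0 = 0 := by
    intro x; have := ha2 1 x 0 0; simp at this; linarith
  have hb01 : ∀ l, b 0 l = 0 := by
    intro l; have := hb1 1 0 0 l; simp at this; linarith
  have hb02 : ∀ x, b x 0 = 0 := by
    intro x; have := hb2 1 x 0 0; simp at this; linarith
  have haadd1 : ∀ x x' y, a (x + x') y = a x y + a x' y := by
    intro x x' y; have := ha1 1 x x' y; simpa using this
  have hasmul1 : ∀ (c : ℝ) x y, a (c • x) y = c * a x y := by
    intro c x y; have := ha1 c x 0 y; simpa [ha01] using this
  have haadd2 : ∀ x y y', a x (y + y') = a x y + a x y' := by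
    intro x y y'; have := ha2 1 x y y'; simpa using this
  have hasmul2 : ∀ (c : ℝ) x y, a x (c • y) = c * a x y := by
    intro c x y; have := ha2 c x y 0; simpa [ha02] using this
  have hbadd1 : ∀ x x' l, b (x + x') l = b x l + b x' l := by
    intro x x' l; have := hb1 1 x x' l; simpa using this
  have hbsmul1 : ∀ (c : ℝ) x l, b (c • x) l = c * b x l := by
    intro c x l; have := hb1 c x 0 l; simpa [hb01] using this
  have hbadd2 : ∀ x l l', b x (l + l') = b x l + b x l' := by
    intro x l l'; have := hb2 1 x l l'; simpa using this
  have hbsmul2 : ∀ (c : ℝ) x l, b x (c • l) = c * b x l := by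
    intro c x l; have := hb2 c x l 0; simpa [hb02] using this
  -- the system map
  let B : (Hh × Mh) →ₗ[ℝ] Module.Dual ℝ (Hh × Mh) :=
    LinearMap.mk₂ ℝ (fun p q => a p.1 q.1 + b q.1 p.2 + b p.1 q.2)
      (by intro p p' q
          simp only [Prod.fst_add, Prod.snd_add, Submodule.coe_add, haadd1, hbadd1, hbadd2]
          ring)
      (by intro c p q
          simp only [Prod.smul_fst, Prod.smul_snd, Submodule.coe_smul, hasmul1, hbsmul1,
            hbsmul2, smul_eq_mul]
          ring)
      (by intro p q q'
          simp only [Prod.fst_add, Prod.snd_add, Submodule.coe_add, haadd2, hbadd1, hbadd2]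
          ring)
      (by intro c p q
          simp only [Prod.smul_fst, Prod.smul_snd, Submodule.coe_smul, hasmul2, hbsmul1,
            hbsmul2, smul_eq_mul]
          ring)
  have hBapp : ∀ p q : Hh × Mh,
      B p q = a (p.1 : H) (q.1 : H) + b (q.1 : H) (p.2 : M) + b (p.1 : H) (q.2 : M) := by
    intro p q; rfl
  -- homogeneous uniqueness
  have khom : ∀ p : Hh × Mh, (∀ y ∈ Hh, a (p.1 : H) y + b y (p.2 : M) = 0) →
      (∀ l ∈ Mh, b (p.1 : H) l = 0) → p = 0 := by
    intro p h1 h2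
    have hxN : (p.1 : H) ∈ N := by
      rw [hN]; exact ⟨p.1.2, h2⟩
    have hsup : sSup {t : ℝ | ∃ y ∈ N, y ≠ 0 ∧ t = a (p.1 : H) y / ‖y‖} ≤ 0 := by
      apply Real.sSup_le _ le_rfl
      rintro t ⟨y, hyN, -, rfl⟩
      have hyH : y ∈ Hh := by rw [hN] at hyN; exact hyN.1
      have hyb : b y (p.2 : M) = 0 := by rw [hN] at hyN; exact hyN.2 _ p.2.2
      have hz : a (p.1 : H) y = 0 := by have := h1 y hyH; rw [hyb] at this; linarith
      simp [hz]
    have hx0 : (p.1 : H) = 0 := by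
      have h := le_trans (hcoer _ hxN) hsup
      have : ‖(p.1 : H)‖ = 0 := by nlinarith [norm_nonneg (p.1 : H)]
      exact norm_eq_zero.mp this
    have hp1 : p.1 = 0 := Subtype.ext hx0
    have hby : ∀ y ∈ Hh, b y (p.2 : M) = 0 := by
      intro y hy
      have := h1 y hy
      rw [hx0, ha01] at this
      linarith
    have hsup2 : sSup {t : ℝ | ∃ x ∈ Hh, x ≠ 0 ∧ t = b x (p.2 : M) / ‖x‖} ≤ 0 := by
      apply Real.sSup_le _ le_rfl
      rintro t ⟨x, hxH, -, rfl⟩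
      simp [hby x hxH]
    have hm0 : (p.2 : M) = 0 := by
      have h := le_trans (hinfsup _ p.2.2) hsup2
      have : ‖(p.2 : M)‖ = 0 := by nlinarith [norm_nonneg (p.2 : M)]
      exact norm_eq_zero.mp this
    exact Prod.ext hp1 (Subtype.ext hm0)
  -- injectivity
  have hinj : Function.Injective B := by
    rw [← LinearMap.ker_eq_bot, LinearMap.ker_eq_bot']
    intro p hp
    apply khom
    · intro y hy
      have := congrFun (congrArg DFunLike.coe hp) (⟨y, hy⟩, 0)
      simp only [hBapp, LinearMap.zero_apply] at this ⊢
      simpa [hb02] using this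
    · intro l hl
      have := congrFun (congrArg DFunLike.coe hp) (0, ⟨l, hl⟩)
      simp only [hBapp, LinearMap.zero_apply] at this ⊢
      simpa [ha02, hb01] using this
  -- surjectivity
  have hsurj : Function.Surjective B := by
    have hdim : Module.finrank ℝ (Hh × Mh) = Module.finrank ℝ (Module.Dual ℝ (Hh × Mh)) :=
      (Subspace.dual_finrank_eq).symm
    exact (LinearMap.injective_iff_surjective_of_finrank_eq_finrank hdim).mp hinj
  -- the RHS functional
  let φ : Module.Dual ℝ (Hh × Mh) :=
    { toFun := fun q => F (q.1 : H) + G (q.2 : M)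
      map_add' := by intro q q'; simp; ring
      map_smul' := by intro c q; simp; ring }
  obtain ⟨p, hp⟩ := hsurj φ
  have hpeq : ∀ q : Hh × Mh,
      a (p.1 : H) (q.1 : H) + b (q.1 : H) (p.2 : M) + b (p.1 : H) (q.2 : M)
        = F (q.1 : H) + G (q.2 : M) := by
    intro q
    have := congrFun (congrArg DFunLike.coe hp) q
    simpa [hBapp, φ] using this
  refine ⟨((p.1 : H), (p.2 : M)), ⟨p.1.2, p.2.2, ?_, ?_⟩, ?_⟩
  · intro y hy
    have := hpeq (⟨y, hy⟩, 0)
    simpa [hb02] using this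
  · intro l hl
    have := hpeq (0, ⟨l, hl⟩)
    simpa [ha02, hb01] using this
  · rintro ⟨x', m'⟩ ⟨hx', hm', h1, h2⟩
    have hq : B (⟨x', hx'⟩, ⟨m', hm'⟩) = B p := by
      rw [hp]
      apply LinearMap.ext
      intro q
      have e1 := h1 (q.1 : H) q.1.2
      have e2 := h2 (q.2 : M) q.2.2
      simp only [hBapp]
      show _ = F (q.1 : H) + G (q.2 : M)
      simp at e1 e2 ⊢
      linarith
    have := hinj hq
    have h1' : x' = (p.1 : H) := congrArg (fun r : Hh × Mh => (r.1 : H)) this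
    have h2' : m' = (p.2 : M) := congrArg (fun r : Hh × Mh => (r.2 : M)) this
    exact Prod.ext h1' h2'
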